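/- Suppose t ≥ 2·log(n)/n and b ≥ 4tn, with m = tN and N = n(n−1)/2. Let G_m ~ G(n,m) and set ℓ_b = log(b/(e·t·n)). Then, except with probability at most exp(−b)/2, the maximum degree of G_m satisfies Δ(G_m) ≤ 2b/ℓ_b. -/

import Mathlib

open scoped BigOperators Classical

-- descending factorial inequality
lemma aux13_descF (mm NN : ℕ) (h : mm ≤ NN) :
    ∀ a : ℕ, mm.descFactorial a * NN ^ a ≤ NN.descFactorial a * mm ^ a := by
  intro a
  induction a with
  | zero => simp
  | succ a ih =>
    have h1 : (mm - a) * NN ≤ (NN - a) * mm := by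
      rcases le_or_gt mm a with hma | hma
      · simp [Nat.sub_eq_zero_of_le hma]
      · rw [Nat.sub_mul, Nat.sub_mul]
        exact tsub_le_tsub (le_of_eq (mul_comm mm NN)) (Nat.mul_le_mul_left a h)
    calc mm.descFactorial (a+1) * NN ^ (a+1)
        = ((mm - a) * NN) * (mm.descFactorial a * NN ^ a) := by
          rw [Nat.descFactorial_succ, pow_succ]; ring
      _ ≤ ((NN - a) * mm) * (NN.descFactorial a * mm ^ a) := Nat.mul_le_mul h1 ih
      _ = NN.descFactorial (a+1) * mm ^ (a+1) := by
          rw [Nat.descFactorial_succ, pow_succ]; ring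

-- counting lemma
lemma aux13_count {α : Type*} [DecidableEq α] (E : Finset α) (P : α → Prop) [DecidablePred P]
    (a m : ℕ) :
    (((E.powersetCard m)).filter (fun S => a ≤ (S.filter P).card)).card
      ≤ (E.filter P).card.choose a * (E.card - a).choose (m - a) := by
  classical
  set pick : Finset α → Finset α := fun s =>
    if h : a ≤ s.card then (Finset.exists_subset_card_eq h).choose else ∅ with hpick
  have hpick_sub : ∀ s : Finset α, pick s ⊆ s := by
    intro s
    by_cases h : a ≤ s.card
    · simp only [hpick, dif_pos h]
      exact (Finset.exists_subset_card_eq h).choose_spec.1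
    · simp [hpick, dif_neg h]
  have hpick_card : ∀ s : Finset α, a ≤ s.card → (pick s).card = a := by
    intro s h
    simp only [hpick, dif_pos h]
    exact (Finset.exists_subset_card_eq h).choose_spec.2
  have hle := Finset.card_le_card_of_injOn
    (f := fun S => (⟨pick (S.filter P), S \ pick (S.filter P)⟩ : Σ _ : Finset α, Finset α))
    (s := (E.powersetCard m).filter (fun S => a ≤ (S.filter P).card))
    (t := ((E.filter P).powersetCard a).sigma (fun A => (E \ A).powersetCard (m - a)))
    (by
      intro S hS
      rw [Finset.mem_coe, Finset.mem_filter, Finset.mem_powersetCard] at hS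
      obtain ⟨⟨hSE, hScard⟩, hSa⟩ := hS
      have hA_sub : pick (S.filter P) ⊆ S.filter P := hpick_sub _
      have hA_card : (pick (S.filter P)).card = a := hpick_card _ hSa
      have hAS : pick (S.filter P) ⊆ S := hA_sub.trans (Finset.filter_subset _ _)
      rw [Finset.mem_coe, Finset.mem_sigma, Finset.mem_powersetCard, Finset.mem_powersetCard]
      refine ⟨⟨hA_sub.trans (Finset.filter_subset_filter _ hSE), hA_card⟩, ?_, ?_⟩
      · exact Finset.sdiff_subset_sdiff hSE le_rfl
      · rw [Finset.card_sdiff_of_subset hAS, hA_card, hScard])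
    (by
      intro S1 hS1 S2 hS2 hEq
      simp only [Finset.coe_filter, Set.mem_setOf_eq] at hS1 hS2
      obtain ⟨hS1mem, hS1a⟩ := hS1
      obtain ⟨hS2mem, hS2a⟩ := hS2
      have h1 : pick (S1.filter P) = pick (S2.filter P) := congrArg Sigma.fst hEq
      have h2 : S1 \ pick (S1.filter P) = S2 \ pick (S2.filter P) := by
        have := (Sigma.mk.inj_iff.mp hEq).2
        exact eq_of_heq this
      have hA1 : pick (S1.filter P) ⊆ S1 := (hpick_sub _).trans (Finset.filter_subset _ _)
      have hA2 : pick (S2.filter P) ⊆ S2 := (hpick_sub _).trans (Finset.filter_subset _ _)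
      calc S1 = pick (S1.filter P) ∪ (S1 \ pick (S1.filter P)) := by
              rw [Finset.union_sdiff_of_subset hA1]
        _ = pick (S2.filter P) ∪ (S2 \ pick (S2.filter P)) := by rw [h2, h1]
        _ = S2 := by rw [Finset.union_sdiff_of_subset hA2])
  refine hle.trans ?_
  rw [Finset.card_sigma]
  have hterm : ∀ A ∈ (E.filter P).powersetCard a,
      ((E \ A).powersetCard (m - a)).card = (E.card - a).choose (m - a) := by
    intro A hA
    rw [Finset.mem_powersetCard] at hA
    rw [Finset.card_powersetCard, Finset.card_sdiff_of_subset (hA.1.trans (Finset.filter_subset _ _)), hA.2]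
  rw [Finset.sum_congr rfl hterm, Finset.sum_const, Finset.card_powersetCard, smul_eq_mul]

-- degree lemma
lemma aux13_degree {n : ℕ} (S : Finset (Sym2 (Fin n))) (hS : ∀ x ∈ S, ¬ x.IsDiag) (v : Fin n) :
    (SimpleGraph.fromEdgeSet (↑S : Set (Sym2 (Fin n)))).degree v
      = (S.filter (fun e => v ∈ e)).card := by
  classical
  rw [SimpleGraph.degree]
  apply Finset.card_bij (fun w _ => s(v, w))
  · intro w hw
    rw [SimpleGraph.mem_neighborFinset, SimpleGraph.fromEdgeSet_adj] at hw
    rw [Finset.mem_filter]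
    exact ⟨hw.1, Sym2.mem_mk_left v w⟩
  · intro w1 h1 w2 h2 h
    exact Sym2.congr_right.mp h
  · intro e he
    rw [Finset.mem_filter] at he
    obtain ⟨heS, hev⟩ := he
    refine ⟨Sym2.Mem.other hev, ?_, Sym2.other_spec hev⟩
    rw [SimpleGraph.mem_neighborFinset, SimpleGraph.fromEdgeSet_adj]
    constructor
    · rw [Sym2.other_spec hev]; exact heS
    · exact (Sym2.other_ne (hS e heS) hev).symm


lemma aux13_choose_exp (n a : ℕ) (t : ℝ) (ha : 1 ≤ a) (ht : 0 ≤ t) :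
    (n.choose a : ℝ) * t ^ a ≤ (Real.exp 1 * t * n / a) ^ a := by
  have ha0 : (0:ℝ) < a := by exact_mod_cast ha
  have hfac : (0:ℝ) < (a.factorial : ℝ) := by exact_mod_cast a.factorial_pos
  have h1 : (n.choose a : ℝ) ≤ (n : ℝ) ^ a / a.factorial := by
    have := Nat.choose_le_pow_div (α := ℝ) a n
    simpa using this
  have hkey : (a : ℝ) ^ a / a.factorial ≤ Real.exp a := by
    calc (a:ℝ) ^ a / a.factorial
        ≤ ∑ i ∈ Finset.range (a+1), (a:ℝ) ^ i / i.factorial := by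
          exact Finset.single_le_sum (f := fun i => (a:ℝ) ^ i / (i.factorial : ℝ))
            (fun i _ => by positivity) (Finset.self_mem_range_succ a)
      _ ≤ Real.exp a := Real.sum_le_exp_of_nonneg (by positivity) _
  have h2 : (1:ℝ) / a.factorial ≤ Real.exp a / (a:ℝ) ^ a := by
    rw [div_le_div_iff₀ hfac (by positivity)]
    rw [div_le_iff₀ hfac] at hkey
    linarith
  calc (n.choose a : ℝ) * t ^ a
      ≤ ((n:ℝ) ^ a / a.factorial) * t ^ a :=
        mul_le_mul_of_nonneg_right h1 (by positivity)
    _ = ((n:ℝ) ^ a * ((1:ℝ)/a.factorial)) * t ^ a := by ring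
    _ ≤ ((n:ℝ) ^ a * (Real.exp a / (a:ℝ) ^ a)) * t ^ a := by
        apply mul_le_mul_of_nonneg_right _ (by positivity)
        exact mul_le_mul_of_nonneg_left h2 (by positivity)
    _ = (Real.exp 1 * t * n / a) ^ a := by
        rw [div_pow, mul_pow, mul_pow, ← Real.exp_nat_mul, mul_one]
        ring

lemma aux13_exponent (nR t b L A : ℝ) (hn : 2 ≤ nR) (ht : 2 * Real.log nR / nR ≤ t)
    (hb : 4 * t * nR ≤ b) (hL : L = Real.log (b / (Real.exp 1 * t * nR)))
    (hA : 2 * b / L ≤ A) :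
    b + Real.log (2 * nR) ≤ A * Real.log (A / (Real.exp 1 * t * nR)) := by
  have he1 : (0:ℝ) < Real.exp 1 := Real.exp_pos 1
  have e2 : (2:ℝ) ≤ Real.exp 1 := by linarith [Real.exp_one_gt_d9]
  have hn0 : (0:ℝ) < nR := by linarith
  have hlogn : 0 < Real.log nR := Real.log_pos (by linarith)
  have ht0 : 0 < t := lt_of_lt_of_le (by positivity) ht
  have htn : 2 * Real.log nR ≤ t * nR := by
    rw [div_le_iff₀ hn0] at ht; linarith
  have hb0 : 0 < b := lt_of_lt_of_le (by positivity) hb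
  set c := Real.exp 1 * t * nR with hc
  have hc0 : 0 < c := by positivity
  have he3 : Real.exp 1 < 2.7182818286 := Real.exp_one_lt_d9
  have hcb : c < b := by nlinarith [mul_pos ht0 hn0]
  have hbc : 1 < b / c := (one_lt_div hc0).mpr hcb
  have hL0 : 0 < L := hL ▸ Real.log_pos hbc
  have hexp : Real.exp L = b / c := by rw [hL]; exact Real.exp_log (by positivity)
  have hbL : b = c * Real.exp L := by rw [hexp]; field_simp
  have heL : L * Real.exp 1 ≤ Real.exp L := by
    have h1 : L ≤ Real.exp (L-1) := by linarith [Real.add_one_le_exp (L-1)]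
    calc L * Real.exp 1 ≤ Real.exp (L-1) * Real.exp 1 :=
          mul_le_mul_of_nonneg_right h1 he1.le
      _ = Real.exp L := by rw [← Real.exp_add]; ring_nf
  set x0 := 2 * b / L with hx0
  have hx00 : 0 < x0 := by positivity
  have hcx0 : c ≤ x0 := by
    rw [hx0, hbL, le_div_iff₀ hL0]
    have hcl : (0:ℝ) ≤ c * L := by positivity
    nlinarith [mul_le_mul_of_nonneg_left heL hc0.le]
  have hAc : c ≤ A := hcx0.trans hA
  have hA0 : 0 < A := lt_of_lt_of_le hx00 hA
  have hlogx0 : Real.log (x0 / c) = Real.log 2 + L - Real.log L := by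
    have hval : x0 / c = 2 * Real.exp L / L := by
      rw [hx0, hbL]; field_simp
    rw [hval, Real.log_div (by positivity) (ne_of_gt hL0),
      Real.log_mul two_ne_zero (Real.exp_ne_zero L), Real.log_exp]
  have mono : x0 * Real.log (x0 / c) ≤ A * Real.log (A / c) := by
    apply mul_le_mul hA
    · exact Real.log_le_log (by positivity) (by gcongr)
    · exact Real.log_nonneg ((one_le_div hc0).mpr hcx0)
    · exact le_of_lt hA0
  have hlogL2 : Real.log L - Real.log 2 ≤ L / (2 * Real.exp 1) := by
    have h1 : Real.log (L/2/Real.exp 1) ≤ L/2/Real.exp 1 - 1 :=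
      Real.log_le_sub_one_of_pos (by positivity)
    have h2 : Real.log (L/2/Real.exp 1) = Real.log L - Real.log 2 - 1 := by
      rw [Real.log_div (by positivity) (Real.exp_ne_zero 1),
        Real.log_div (ne_of_gt hL0) two_ne_zero, Real.log_exp]
    have h3 : L/2/Real.exp 1 = L / (2 * Real.exp 1) := by
      rw [div_div]
    rw [h2, h3] at h1
    linarith
  have hx0val : x0 * Real.log (x0/c) = 2*b + (2*b/L)*(Real.log 2 - Real.log L) := by
    rw [hlogx0, hx0]; field_simp; ring
  have hfin : b + Real.log (2*nR) ≤ x0 * Real.log (x0/c) := by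
    rw [hx0val]
    have t1 : (2*b/L) * (Real.log L - Real.log 2) ≤ (2*b/L) * (L/(2*Real.exp 1)) :=
      mul_le_mul_of_nonneg_left hlogL2 (by positivity)
    have t2 : (2*b/L) * (L/(2*Real.exp 1)) = b / Real.exp 1 := by
      field_simp
    have t3 : b / Real.exp 1 ≤ b / 2 :=
      div_le_div_of_nonneg_left (le_of_lt hb0) two_pos e2
    have hlog2n : Real.log (2*nR) = Real.log 2 + Real.log nR :=
      Real.log_mul two_ne_zero (ne_of_gt hn0)
    have hlog2 : Real.log 2 ≤ Real.log nR := Real.log_le_log (by norm_num) hn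
    have hb8 : 8 * Real.log nR ≤ b := by linarith
    have tneg : (2*b/L)*(Real.log 2 - Real.log L)
        = -((2*b/L)*(Real.log L - Real.log 2)) := by ring
    rw [tneg, hlog2n]
    linarith
  linarith [mono, hfin]

theorem stmt_13 (n m : ℕ) (t b : ℝ) (hn : 2 ≤ n)
    (ht : 2 * Real.log n / n ≤ t)
    (hm : (m : ℝ) = t * ((n * (n - 1) / 2 : ℕ) : ℝ))
    (hb : 4 * t * n ≤ b) :
    ∀ ℓb : ℝ, ℓb = Real.log (b / (Real.exp 1 * t * n)) →
    -- Ω : the set of graphs on [n] with exactly m edges (as sets of non-diagonal edges)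
    ∀ Ω : Finset (Finset (Sym2 (Fin n))),
      Ω = Finset.univ.filter (fun S => S.card = m ∧ ∀ x ∈ S, ¬ x.IsDiag) →
    ((Ω.filter (fun S => ¬ ∀ v : Fin n,
        ((SimpleGraph.fromEdgeSet (↑S : Set (Sym2 (Fin n)))).degree v : ℝ)
          ≤ 2 * b / ℓb)).card : ℝ) / (Ω.card : ℝ)
      ≤ Real.exp (-b) / 2 := by
  intro ℓb hℓb Ω hΩ
  classical
  suffices hMAIN : ((Ω.filter (fun S : Finset (Sym2 (Fin n)) => ¬ ∀ v : Fin n,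
        ((SimpleGraph.fromEdgeSet (↑S : Set (Sym2 (Fin n)))).degree v : ℝ)
          ≤ 2 * b / ℓb)).card : ℝ) / (Ω.card : ℝ) ≤ Real.exp (-b) / 2 by
    have himg : (Ω >>= fun a => pure (↑a : Set (Sym2 (Fin n)))) = Ω.image (fun a : Finset (Sym2 (Fin n)) => (↑a : Set (Sym2 (Fin n)))) := by
      rw [show (Ω >>= fun a => pure (↑a : Set (Sym2 (Fin n))))
          = Ω.sup (fun a => {(↑a : Set (Sym2 (Fin n)))}) from rfl, Finset.sup_singleton_apply]
    have hcards : (Ω.filter (fun S : Finset (Sym2 (Fin n)) => ¬ ∀ v : Fin n,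
          ((SimpleGraph.fromEdgeSet (↑S : Set (Sym2 (Fin n)))).degree v : ℝ)
            ≤ 2 * b / ℓb)).card
        = ((Ω >>= fun a => pure (↑a : Set (Sym2 (Fin n)))).filter
          (fun S : Set (Sym2 (Fin n)) => ¬ ∀ v : Fin n,
            ((SimpleGraph.fromEdgeSet S).degree v : ℝ) ≤ 2 * b / ℓb)).card := by
      refine Finset.card_bij (fun S _ => (↑S : Set (Sym2 (Fin n)))) ?_ ?_ ?_
      · intro S hS
        rw [Finset.mem_filter] at hS ⊢
        refine ⟨?_, by convert hS.2⟩
        rw [himg, Finset.mem_image]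
        exact ⟨S, hS.1, rfl⟩
      · intro S1 h1 S2 h2 h
        exact Finset.coe_injective h
      · intro x hx
        rw [Finset.mem_filter] at hx
        obtain ⟨hx1, hPx⟩ := hx
        rw [himg, Finset.mem_image] at hx1
        obtain ⟨S, hSΩ, rfl⟩ := hx1
        exact ⟨S, Finset.mem_filter.mpr ⟨hSΩ, by convert hPx⟩, rfl⟩
    rw [hcards] at hMAIN
    exact hMAIN
  have hRHS : (0:ℝ) < Real.exp (-b) / 2 := by positivity
  -- basic positivity
  have hn0 : (0:ℝ) < n := by
    have : (2:ℝ) ≤ n := by exact_mod_cast hn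
    linarith
  have hn2R : (2:ℝ) ≤ (n:ℝ) := by exact_mod_cast hn
  have hlogn : 0 < Real.log n := Real.log_pos (by linarith)
  have ht0 : 0 < t := lt_of_lt_of_le (by positivity) ht
  have hb0 : 0 < b := lt_of_lt_of_le (by positivity) hb
  have he1 : (0:ℝ) < Real.exp 1 := Real.exp_pos 1
  have hc0 : (0:ℝ) < Real.exp 1 * t * n := by positivity
  have hcb : Real.exp 1 * t * n < b := by
    nlinarith [mul_pos ht0 hn0, Real.exp_one_lt_d9]
  have hL0 : 0 < ℓb := hℓb ▸ Real.log_pos ((one_lt_div hc0).mpr hcb)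
  set a : ℕ := ⌈2 * b / ℓb⌉₊ with haDef
  have ha1 : 1 ≤ a := Nat.one_le_iff_ne_zero.mpr (by
    have : 0 < a := Nat.ceil_pos.mpr (by positivity)
    omega)
  have haR : 2 * b / ℓb ≤ (a:ℝ) := Nat.le_ceil _
  have haR0 : (0:ℝ) < a := by exact_mod_cast ha1
  set E : Finset (Sym2 (Fin n)) := Finset.univ.filter (fun x => ¬ x.IsDiag) with hE
  have hEdiag : ∀ x ∈ E, ¬ x.IsDiag := fun x hx => (Finset.mem_filter.mp hx).2
  have hΩ' : Ω = E.powersetCard m := by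
    rw [hΩ]; ext S
    simp only [Finset.mem_filter, Finset.mem_univ, true_and, Finset.mem_powersetCard, hE]
    constructor
    · rintro ⟨hc, hd⟩
      exact ⟨fun x hx => Finset.mem_filter.mpr ⟨Finset.mem_univ x, hd x hx⟩, hc⟩
    · rintro ⟨hsub, hc⟩
      exact ⟨hc, fun x hx => (Finset.mem_filter.mp (hsub hx)).2⟩
  rcases lt_or_ge E.card m with hmN | hmN
  · -- Ω is empty
    have h0 : Ω = ∅ := by rw [hΩ']; exact Finset.powersetCard_eq_empty.mpr hmN
    rw [h0]
    simp only [Finset.filter_empty, Finset.card_empty, Nat.cast_zero, zero_div]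
    exact hRHS.le
  -- main case : m ≤ E.card
  have hEcard : (E.card : ℝ) = ((n * (n-1) / 2 : ℕ) : ℝ) := by
    congr 1
    have h1 : E.card = Fintype.card {x : Sym2 (Fin n) // ¬ x.IsDiag} := by
      rw [hE, Fintype.card_subtype]
    rw [h1, Sym2.card_subtype_not_diag, Fintype.card_fin, Nat.choose_two_right]
  have hmE : (m:ℝ) = t * E.card := by rw [hm, hEcard]
  have hΩcard : Ω.card = E.card.choose m := by rw [hΩ', Finset.card_powersetCard]
  have hΩpos : 0 < Ω.card := by rw [hΩcard]; exact Nat.choose_pos hmN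
  have hΩposR : (0:ℝ) < (Ω.card : ℝ) := by exact_mod_cast hΩpos
  set Bad := Ω.filter (fun S : Finset (Sym2 (Fin n)) => ¬ ∀ v : Fin n,
      ((SimpleGraph.fromEdgeSet (↑S : Set (Sym2 (Fin n)))).degree v : ℝ) ≤ 2 * b / ℓb) with hBad
  -- union bound
  have hsub : Bad ⊆ Finset.univ.biUnion (fun v : Fin n =>
      Ω.filter (fun S : Finset (Sym2 (Fin n)) => a ≤ (Finset.filter (fun e => v ∈ e) S).card)) := by
    intro S hS
    rw [hBad, Finset.mem_filter] at hS
    obtain ⟨hSΩ, hbad⟩ := hS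
    push_neg at hbad
    obtain ⟨v, hv⟩ := hbad
    have hSdiag : ∀ x ∈ S, ¬ x.IsDiag := by
      have := hΩ ▸ hSΩ
      exact (Finset.mem_filter.mp this).2.2
    rw [Finset.mem_biUnion]
    refine ⟨v, Finset.mem_univ v, Finset.mem_filter.mpr ⟨hSΩ, ?_⟩⟩
    rw [← aux13_degree S hSdiag v]
    exact Nat.ceil_le.mpr hv.le
  -- per vertex bound
  have hK : ∀ v : Fin n, (E.filter (fun e => v ∈ e)).card ≤ n := by
    intro v
    rw [← aux13_degree E hEdiag v]
    have := SimpleGraph.degree_lt_card_verts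
      (G := SimpleGraph.fromEdgeSet (↑E : Set (Sym2 (Fin n)))) v
    simpa [Fintype.card_fin] using this.le
  have hperv : ∀ v : Fin n,
      (Ω.filter (fun S : Finset (Sym2 (Fin n)) => a ≤ (Finset.filter (fun e => v ∈ e) S).card)).card
        ≤ n.choose a * (E.card - a).choose (m - a) := by
    intro v
    rw [hΩ']
    refine (aux13_count E (fun e => v ∈ e) a m).trans ?_
    exact Nat.mul_le_mul_right _ (Nat.choose_le_choose a (hK v))
  have hBadcard : Bad.card ≤ n * (n.choose a * (E.card - a).choose (m - a)) := by
    calc Bad.card ≤ (Finset.univ.biUnion (fun v : Fin n =>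
        Ω.filter (fun S : Finset (Sym2 (Fin n)) => a ≤ (Finset.filter (fun e => v ∈ e) S).card))).card :=
          Finset.card_le_card hsub
      _ ≤ ∑ v : Fin n, (Ω.filter (fun S : Finset (Sym2 (Fin n)) => a ≤ (Finset.filter (fun e => v ∈ e) S).card)).card :=
          Finset.card_biUnion_le
      _ ≤ ∑ _v : Fin n, n.choose a * (E.card - a).choose (m - a) :=
          Finset.sum_le_sum (fun v _ => hperv v)
      _ = n * (n.choose a * (E.card - a).choose (m - a)) := by
          rw [Finset.sum_const, Finset.card_univ, Fintype.card_fin, smul_eq_mul]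
  -- case a > m : Bad is empty
  rcases lt_or_ge m a with ham | ham
  · have hBadEmpty : Bad = ∅ := by
      apply Finset.eq_empty_of_forall_notMem
      intro S hS
      have := hsub hS
      rw [Finset.mem_biUnion] at this
      obtain ⟨v, _, hvS⟩ := this
      rw [Finset.mem_filter] at hvS
      have hScard : S.card = m := by
        have := hΩ' ▸ hvS.1
        exact (Finset.mem_powersetCard.mp this).2
      have : a ≤ m := le_trans hvS.2 (le_trans (Finset.card_filter_le _ _) hScard.le)
      omega
    rw [hBadEmpty]
    simp only [Finset.card_empty, Nat.cast_zero, zero_div]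
    exact hRHS.le
  -- main case a ≤ m ≤ N
  set N := E.card with hN
  have haN : a ≤ N := ham.trans hmN
  have hNpos : 0 < N := lt_of_lt_of_le ha1 haN
  have hN0 : (0:ℝ) < (N:ℝ) := by exact_mod_cast hNpos
  have hteq : t = (m:ℝ) / (N:ℝ) := by
    rw [hmE]; field_simp
  have hCNm : (0:ℝ) < (N.choose m : ℝ) := by exact_mod_cast Nat.choose_pos hmN
  have hCNa : (0:ℝ) < (N.choose a : ℝ) := by exact_mod_cast Nat.choose_pos haN
  have hidentity : (N.choose m : ℝ) * (m.choose a : ℝ)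
      = (N.choose a : ℝ) * ((N-a).choose (m-a) : ℝ) := by
    exact_mod_cast congrArg (Nat.cast (R := ℝ)) (Nat.choose_mul (n := N) ham)
  have hfac : (0:ℝ) < (a.factorial : ℝ) := by exact_mod_cast a.factorial_pos
  have hchooseNa : (m.choose a : ℝ) * (N:ℝ)^a ≤ (N.choose a : ℝ) * (m:ℝ)^a := by
    have h1 : (m.descFactorial a : ℝ) * (N:ℝ)^a ≤ (N.descFactorial a : ℝ) * (m:ℝ)^a := by
      exact_mod_cast aux13_descF m N hmN a
    rw [Nat.descFactorial_eq_factorial_mul_choose, Nat.descFactorial_eq_factorial_mul_choose] at h1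
    push_cast at h1
    have h2 : (a.factorial:ℝ) * ((m.choose a:ℝ) * (N:ℝ)^a)
        ≤ (a.factorial:ℝ) * ((N.choose a:ℝ) * (m:ℝ)^a) := by
      calc (a.factorial:ℝ) * ((m.choose a:ℝ) * (N:ℝ)^a)
          = ((a.factorial:ℝ) * (m.choose a:ℝ)) * (N:ℝ)^a := by ring
        _ ≤ ((a.factorial:ℝ) * (N.choose a:ℝ)) * (m:ℝ)^a := h1
        _ = (a.factorial:ℝ) * ((N.choose a:ℝ) * (m:ℝ)^a) := by ring
    exact le_of_mul_le_mul_left h2 hfac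
  have hratio : (((N-a).choose (m-a) : ℕ) : ℝ) / (N.choose m : ℝ) ≤ t ^ a := by
    have hr1 : (((N-a).choose (m-a):ℕ):ℝ) / (N.choose m:ℝ) = (m.choose a:ℝ) / (N.choose a:ℝ) := by
      field_simp
      linear_combination -hidentity
    rw [hr1, hteq, div_pow, div_le_div_iff₀ hCNa (pow_pos hN0 a)]
    exact hchooseNa.trans_eq (mul_comm _ _)
  have hchain : (Bad.card : ℝ) / (Ω.card : ℝ)
      ≤ (n:ℝ) * ((n.choose a : ℝ) * ((((N-a).choose (m-a) : ℕ) : ℝ) / (N.choose m : ℝ))) := by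
    rw [hΩcard, div_le_iff₀ hCNm]
    have hBC : (Bad.card:ℝ) ≤ (n:ℝ) * ((n.choose a:ℝ) * ((((N-a).choose (m-a):ℕ)):ℝ)) := by
      exact_mod_cast hBadcard
    calc (Bad.card:ℝ) ≤ (n:ℝ) * ((n.choose a:ℝ) * ((((N-a).choose (m-a):ℕ)):ℝ)) := hBC
      _ = (n:ℝ) * ((n.choose a:ℝ) * (((((N-a).choose (m-a):ℕ)):ℝ) / (N.choose m:ℝ)))
            * (N.choose m:ℝ) := by field_simp
  have hexpA := aux13_exponent (n:ℝ) t b ℓb (a:ℝ) hn2R ht hb hℓb haR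
  have hpow : (Real.exp 1 * t * (n:ℝ) / (a:ℝ)) ^ a ≤ Real.exp (-(b + Real.log (2*(n:ℝ)))) := by
    have hpos : (0:ℝ) < Real.exp 1 * t * (n:ℝ) / (a:ℝ) := by positivity
    rw [← Real.exp_log (pow_pos hpos a), Real.log_pow]
    apply Real.exp_le_exp.mpr
    have hlg : Real.log (Real.exp 1 * t * (n:ℝ) / (a:ℝ))
        = -(Real.log ((a:ℝ) / (Real.exp 1 * t * (n:ℝ)))) := by
      rw [Real.log_div (by positivity) (ne_of_gt haR0),
        Real.log_div (ne_of_gt haR0) (by positivity)]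
      ring
    rw [hlg]
    have h' : (a:ℝ) * -(Real.log ((a:ℝ) / (Real.exp 1 * t * (n:ℝ))))
        = -((a:ℝ) * Real.log ((a:ℝ) / (Real.exp 1 * t * (n:ℝ)))) := by ring
    rw [h']
    linarith [hexpA]
  have hfinal : ((n:ℝ)) * Real.exp (-(b + Real.log (2*(n:ℝ)))) = Real.exp (-b) / 2 := by
    have h2n : Real.exp (-(Real.log (2*(n:ℝ)))) = (2*(n:ℝ))⁻¹ := by
      rw [Real.exp_neg, Real.exp_log (by positivity)]
    rw [neg_add, Real.exp_add, h2n]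
    field_simp
  calc (Bad.card : ℝ) / (Ω.card : ℝ)
      ≤ (n:ℝ) * ((n.choose a : ℝ) * ((((N-a).choose (m-a) : ℕ) : ℝ) / (N.choose m : ℝ))) := hchain
    _ ≤ (n:ℝ) * ((n.choose a : ℝ) * t ^ a) := by
        apply mul_le_mul_of_nonneg_left _ hn0.le
        exact mul_le_mul_of_nonneg_left hratio (by positivity)
    _ ≤ (n:ℝ) * ((Real.exp 1 * t * (n:ℝ) / (a:ℝ)) ^ a) := by
        apply mul_le_mul_of_nonneg_left _ hn0.le
        exact aux13_choose_exp n a t ha1 ht0.le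
    _ ≤ (n:ℝ) * Real.exp (-(b + Real.log (2*(n:ℝ)))) :=
        mul_le_mul_of_nonneg_left hpow hn0.le
    _ = Real.exp (-b) / 2 := hfinal
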